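/- For 0 < α < 1 with α ≠ 1/2, the double integral ∫₀¹∫₀¹ (1-xy)^(2α-2) dx dy equals (γ + Ψ(2α))/(2α-1), where γ is the Euler–Mascheroni constant and Ψ is the digamma function; in particular the integral is finite. -/

import Mathlib

open Real Filter Set Finset intervalIntegral MeasureTheory Topology

lemma aux_eq (x : ℝ) (hx : 0 < x) (m : ℕ) :
    1/((m:ℝ)+1) - 1/(x+m) = (x-1)/(((m:ℝ)+1)*(x+m)) := by
  have h1 : ((m:ℝ)+1) ≠ 0 := by positivity
  have h2 : x + (m:ℝ) ≠ 0 := by positivity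
  field_simp
  ring

lemma abs_aux_le (x : ℝ) (hx : 0 < x) (m : ℕ) :
    |1/((m:ℝ)+1) - 1/(x+m)| ≤ |x - 1| * (1+1/x) * (1/((m:ℝ)+1)^2) := by
  rw [aux_eq x hx m, abs_div]
  have h1 : (0:ℝ) < ((m:ℝ)+1)*(x+m) := by positivity
  rw [abs_of_pos h1, div_le_iff₀ h1]
  have key : ((m:ℝ)+1)^2 ≤ (1+1/x)*(((m:ℝ)+1)*(x+m)) := by
    have : (1+1/x)*(((m:ℝ)+1)*(x+m)) - ((m:ℝ)+1)^2 = ((m:ℝ)+1)*(x + m/x) := by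
      field_simp; ring
    nlinarith [mul_nonneg (by positivity : (0:ℝ) ≤ (m:ℝ)+1) (by positivity : (0:ℝ) ≤ x + m/x)]
  calc |x - 1| = |x - 1| * (((m:ℝ)+1)^2) * (1/((m:ℝ)+1)^2) := by
        field_simp
    _ ≤ |x - 1| * ((1+1/x)*(((m:ℝ)+1)*(x+m))) * (1/((m:ℝ)+1)^2) := by
        gcongr
    _ = |x - 1| * (1+1/x) * (1/((m:ℝ)+1)^2) * (((m:ℝ)+1)*(x+m)) := by ring

lemma summable_inv_sq : Summable (fun m : ℕ => (1/((m:ℝ)+1)^2)) := by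
  have := (Real.summable_one_div_nat_pow (p := 2)).2 one_lt_two
  have := (summable_nat_add_iff (f := fun n : ℕ => 1/(n:ℝ)^2) 1).2 this
  convert this using 2 with m
  rfl
  push_cast
  ring_nf

lemma summable_abs_aux (x : ℝ) (hx : 0 < x) :
    Summable (fun m : ℕ => |1/((m:ℝ)+1) - 1/(x+m)|) :=
  Summable.of_nonneg_of_le (fun _ => abs_nonneg _) (abs_aux_le x hx)
    (summable_inv_sq.mul_left _)

lemma summable_aux (x : ℝ) (hx : 0 < x) :
    Summable (fun m : ℕ => 1/((m:ℝ)+1) - 1/(x+m)) :=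
  (summable_abs_aux x hx).of_abs

/-- Gauss/Weierstrass series for the digamma function. -/
lemma hasDerivAt_log_Gamma (x : ℝ) (hx : 0 < x) :
    HasDerivAt (fun y : ℝ => Real.log (Real.Gamma y))
      (-Real.eulerMascheroniConstant + ∑' m : ℕ, (1/((m:ℝ)+1) - 1/(x+m))) x := by
  set s : Set ℝ := Ioo (x/2) (x+2) with hs
  have hxs : x ∈ s := by constructor <;> [linarith; linarith]
  have hspos : ∀ y ∈ s, (0:ℝ) < y := fun y hy => lt_trans (by linarith) hy.1
  set a : ℕ → ℝ → ℝ := fun m y => 1/((m:ℝ)+1) - 1/(y+m) with ha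
  -- uniform convergence of partial sums of `a` on s
  have hM : TendstoUniformlyOn (fun N y => ∑ m ∈ range N, a m y)
      (fun y => ∑' m, a m y) atTop s := by
    apply tendstoUniformlyOn_tsum_nat
      (u := fun m => (x+3) * (1 + 2/x) * (1/((m:ℝ)+1)^2))
    · exact summable_inv_sq.mul_left _
    · intro m y hy
      have hy0 : 0 < y := hspos y hy
      refine (abs_aux_le y hy0 m).trans ?_
      have h1 : |y - 1| ≤ x + 3 := by
        rw [abs_le]; constructor <;> [nlinarith [hy.1, hy.2]; nlinarith [hy.2]]
      have h2 : 1 + 1/y ≤ 1 + 2/x := by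
        have : 1/y ≤ 2/x := by
          rw [div_le_div_iff₀ hy0 hx]
          nlinarith [hy.1]
        linarith
      have h3 : (0:ℝ) ≤ 1/((m:ℝ)+1)^2 := by positivity
      have h4 : (0:ℝ) ≤ |y - 1| := abs_nonneg _
      have h5 : (0:ℝ) ≤ 1 + 1/y := by positivity
      nlinarith [mul_le_mul h1 h2 h5 (by linarith : (0:ℝ) ≤ x + 3)]
  -- the sequence of derivatives
  set f' : ℕ → ℝ → ℝ := fun n y => Real.log n - ∑ m ∈ range (n+1), 1/(y+m) with hf'
  have hderiv : ∀ n : ℕ, ∀ y ∈ s, HasDerivAt (fun y => Real.BohrMollerup.logGammaSeq y n)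
      (f' n y) y := by
    intro n y hy
    have h1 : HasDerivAt (fun y : ℝ => y * Real.log n + Real.log (Nat.factorial n) -
        ∑ m ∈ range (n+1), Real.log (y + m))
        (Real.log n - ∑ m ∈ range (n+1), 1/(y+m)) y := by
      refine HasDerivAt.sub ((hasDerivAt_mul_const _).add_const _) ?_
      refine HasDerivAt.fun_sum (fun m _ => ?_)
      have := ((hasDerivAt_id y).add_const (m:ℝ)).log (by have := hspos y hy; positivity)
      simpa using this
    exact h1
  have harm_cast : ∀ n : ℕ, (harmonic n : ℝ) = ∑ m ∈ range n, 1/((m:ℝ)+1) := by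
    intro n
    rw [harmonic]
    push_cast
    simp [one_div]
  have hc : Tendsto (fun n : ℕ => Real.log n - (harmonic (n+1) : ℝ)) atTop
      (𝓝 (-Real.eulerMascheroniConstant)) := by
    have h1 := Real.tendsto_harmonic_sub_log
    have h2 : Tendsto (fun n : ℕ => 1/((n:ℝ)+1)) atTop (𝓝 0) :=
      tendsto_one_div_add_atTop_nhds_zero_nat
    have h3 := (h1.neg.sub h2)
    rw [sub_zero] at h3
    refine h3.congr (fun n => ?_)
    have : (harmonic (n+1) : ℝ) = (harmonic n : ℝ) + 1/((n:ℝ)+1) := by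
      rw [harmonic_succ]
      push_cast
      simp [one_div]
    rw [this]
    ring
  have hM1 : TendstoUniformlyOn (fun n y => ∑ m ∈ range (n+1), a m y)
      (fun y => ∑' m, a m y) atTop s :=
    fun u hu => (tendsto_add_atTop_nat 1).eventually (hM u hu)
  have hunif : TendstoUniformlyOn f'
      (fun y => -Real.eulerMascheroniConstant + ∑' m, a m y) atTop s := by
    refine ((hc.tendstoUniformlyOn_const s).add hM1).congr ?_
    refine Eventually.of_forall (fun n y hy => ?_)
    have hy0 : 0 < y := hspos y hy
    simp only [hf', ha, Pi.add_apply]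
    rw [Finset.sum_sub_distrib, ← harm_cast (n+1)]
    ring
  have := hasDerivAt_of_tendstoUniformlyOn isOpen_Ioo hunif
    (Eventually.of_forall hderiv)
    (fun y hy => Real.BohrMollerup.tendsto_log_gamma (hspos y hy)) hxs
  exact this

lemma inner_integral (z : ℝ) (hz1 : z ≠ 1) {y : ℝ} (hy : y ∈ Ioo (0:ℝ) 1) :
    ∫ x in (0:ℝ)..1, (1 - x*y)^(z-2) = (1 - (1-y)^(z-1))/((z-1)*y) := by
  have hy0 := hy.1
  have hy1 := hy.2
  have hpos : ∀ x ∈ Set.uIcc (0:ℝ) 1, 0 < 1 - x*y := by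
    intro x hx
    rw [Set.uIcc_of_le zero_le_one] at hx
    nlinarith [hx.1, hx.2]
  have hz1' : z - 1 ≠ 0 := sub_ne_zero.2 hz1
  have hcont : ContinuousOn (fun x : ℝ => (1 - x*y)^(z-2)) (Set.uIcc 0 1) := by
    apply ContinuousOn.rpow_const
    · fun_prop
    · exact fun x hx => Or.inl (hpos x hx).ne'
  have hF : ∀ x ∈ Set.uIcc (0:ℝ) 1,
      HasDerivAt (fun x : ℝ => -(1 - x*y)^(z-1) / ((z-1)*y)) ((1 - x*y)^(z-2)) x := by
    intro x hx
    have h1 : HasDerivAt (fun x : ℝ => 1 - x*y) (-y) x := (hasDerivAt_mul_const y).const_sub 1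
    have h2 := (h1.rpow_const (p := z-1) (Or.inl (hpos x hx).ne')).neg.div_const ((z-1)*y)
    convert h2 using 1
    rfl
    rfl
    rfl
    have : z - 1 - 1 = z - 2 := by ring
    rw [this]
    field_simp
  rw [intervalIntegral.integral_eq_sub_of_hasDerivAt hF hcont.intervalIntegrable]
  rw [show (1:ℝ) - 1*y = 1 - y by ring, show (1:ℝ) - 0*y = 1 by ring, Real.one_rpow]
  ring

lemma hasSum_geom_aux (z : ℝ) {u : ℝ} (hu : u ∈ Ioo (0:ℝ) 1) :
    HasSum (fun m : ℕ => u^(m:ℝ) - u^((m:ℝ)+(z-1))) ((1 - u^(z-1))/(1-u)) := by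
  have hg : HasSum (fun m : ℕ => (1 - u^(z-1)) * u^m) ((1 - u^(z-1)) * (1-u)⁻¹) :=
    (hasSum_geometric_of_lt_one hu.1.le hu.2).mul_left _
  have : (1 - u^(z-1)) * (1-u)⁻¹ = (1 - u^(z-1))/(1-u) := by rw [div_eq_mul_inv]
  rw [this] at hg
  refine hg.congr_fun (fun m => ?_)
  rw [Real.rpow_add hu.1, Real.rpow_natCast]
  ring

lemma term_integral (z : ℝ) (hz0 : 0 < z) (m : ℕ) :
    ∫ u in Ioc (0:ℝ) 1, (u^(m:ℝ) - u^((m:ℝ)+(z-1))) = 1/((m:ℝ)+1) - 1/(z+m) := by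
  have h1 : (-1:ℝ) < (m:ℝ) := by
    have : (0:ℝ) ≤ (m:ℝ) := Nat.cast_nonneg m
    linarith
  have h2 : (-1:ℝ) < (m:ℝ)+(z-1) := by
    have : (0:ℝ) ≤ (m:ℝ) := Nat.cast_nonneg m
    linarith
  rw [← intervalIntegral.integral_of_le zero_le_one,
    intervalIntegral.integral_sub (intervalIntegral.intervalIntegrable_rpow' h1)
      (intervalIntegral.intervalIntegrable_rpow' h2),
    integral_rpow (Or.inl h1), integral_rpow (Or.inl h2)]
  rw [Real.one_rpow, Real.one_rpow, Real.zero_rpow (by linarith : (m:ℝ)+1 ≠ 0),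
    Real.zero_rpow (by intro h; nlinarith : (m:ℝ)+(z-1)+1 ≠ 0)]
  have hmz : (m:ℝ)+(z-1)+1 = z + m := by ring
  rw [hmz]
  have : (0:ℝ) < z + m := by positivity
  field_simp
  ring

lemma series_integral (z : ℝ) (hz0 : 0 < z) (hz1 : z ≠ 1) :
    ∫ u in Ioc (0:ℝ) 1, (1 - u^(z-1))/(1-u) = ∑' m : ℕ, (1/((m:ℝ)+1) - 1/(z+m)) := by
  set F : ℕ → ℝ → ℝ := fun m u => u^(m:ℝ) - u^((m:ℝ)+(z-1)) with hF
  have hm0 : ∀ m : ℕ, (0:ℝ) ≤ (m:ℝ) := fun m => Nat.cast_nonneg m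
  have hint : ∀ m : ℕ, IntegrableOn (F m) (Ioc (0:ℝ) 1) := by
    intro m
    rw [← intervalIntegrable_iff_integrableOn_Ioc_of_le zero_le_one]
    exact (intervalIntegral.intervalIntegrable_rpow' (by have := hm0 m; linarith)).sub
      (intervalIntegral.intervalIntegrable_rpow' (by have := hm0 m; linarith))
  have hterm : ∀ m : ℕ, ∫ u in Ioc (0:ℝ) 1, F m u = 1/((m:ℝ)+1) - 1/(z+m) :=
    term_integral z hz0
  have hnorm : ∀ m : ℕ, ∫ u in Ioc (0:ℝ) 1, ‖F m u‖ = |1/((m:ℝ)+1) - 1/(z+m)| := by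
    intro m
    rcases le_or_gt z 1 with hz | hz
    · have hle : ∀ u ∈ Ioc (0:ℝ) 1, F m u ≤ 0 := by
        intro u hu
        have := Real.rpow_le_rpow_of_exponent_ge hu.1 hu.2
          (show (m:ℝ)+(z-1) ≤ (m:ℝ) by linarith)
        simpa [hF] using sub_nonpos.2 this
      have h1 : ∫ u in Ioc (0:ℝ) 1, ‖F m u‖ = ∫ u in Ioc (0:ℝ) 1, -(F m u) :=
        setIntegral_congr_fun measurableSet_Ioc
          (fun u hu => by rw [Real.norm_eq_abs, abs_of_nonpos (hle u hu)])
      rw [h1, MeasureTheory.integral_neg, hterm m, abs_of_nonpos]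
      have h2 : (0:ℝ) < z + m := by positivity
      have h3 : z + (m:ℝ) ≤ (m:ℝ) + 1 := by linarith
      have := one_div_le_one_div_of_le h2 h3
      linarith
    · have hle : ∀ u ∈ Ioc (0:ℝ) 1, 0 ≤ F m u := by
        intro u hu
        have := Real.rpow_le_rpow_of_exponent_ge hu.1 hu.2
          (show (m:ℝ) ≤ (m:ℝ)+(z-1) by linarith)
        simpa [hF] using sub_nonneg.2 this
      have h1 : ∫ u in Ioc (0:ℝ) 1, ‖F m u‖ = ∫ u in Ioc (0:ℝ) 1, F m u :=
        setIntegral_congr_fun measurableSet_Ioc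
          (fun u hu => by rw [Real.norm_eq_abs, abs_of_nonneg (hle u hu)])
      rw [h1, hterm m, abs_of_nonneg]
      have h2 : (0:ℝ) < (m:ℝ) + 1 := by positivity
      have h3 : (m:ℝ) + 1 ≤ z + m := by linarith
      have := one_div_le_one_div_of_le h2 h3
      linarith
  have hsum : Summable (fun m : ℕ => ∫ u in Ioc (0:ℝ) 1, ‖F m u‖) := by
    have heq : (fun m : ℕ => ∫ u in Ioc (0:ℝ) 1, ‖F m u‖)
        = fun m : ℕ => |1/((m:ℝ)+1) - 1/(z+m)| := funext hnorm
    rw [heq]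
    exact summable_abs_aux z hz0
  have hswap := MeasureTheory.integral_tsum_of_summable_integral_norm
    (μ := volume.restrict (Ioc (0:ℝ) 1)) hint hsum
  calc ∫ u in Ioc (0:ℝ) 1, (1 - u^(z-1))/(1-u)
      = ∫ u in Ioc (0:ℝ) 1, ∑' m : ℕ, F m u := by
        refine setIntegral_congr_fun measurableSet_Ioc (fun u hu => ?_)
        rcases eq_or_lt_of_le hu.2 with h1 | h1
        · have : ∀ m : ℕ, F m u = 0 := by
            intro m
            simp [hF, h1, Real.one_rpow]
          rw [h1] at this ⊢
          simp [this, tsum_zero]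
        · exact ((hasSum_geom_aux z ⟨hu.1, h1⟩).tsum_eq).symm
    _ = ∑' m : ℕ, ∫ u in Ioc (0:ℝ) 1, F m u := hswap.symm
    _ = ∑' m : ℕ, (1/((m:ℝ)+1) - 1/(z+m)) := by rw [funext hterm]

lemma integrable_square (z : ℝ) (hz0 : 0 < z) (hz2 : z < 2) :
    IntegrableOn (fun p : ℝ × ℝ => (1 - p.1 * p.2) ^ (z-2))
      (Icc (0:ℝ) 1 ×ˢ Icc (0:ℝ) 1) := by
  set r : ℝ := (z-2)/2 with hr
  have hr1 : (-1:ℝ) < r := by rw [hr]; linarith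
  have hr0 : r < 0 := by rw [hr]; linarith
  -- integrability of (1-t)^r on Icc 0 1
  have hg1 : IntegrableOn (fun t : ℝ => (1-t)^r) (Icc (0:ℝ) 1) := by
    have hii : IntervalIntegrable (fun t : ℝ => t ^ r) volume 0 1 :=
      intervalIntegral.intervalIntegrable_rpow' hr1
    have hii2 := (hii.comp_sub_left 1).symm
    norm_num at hii2
    rw [intervalIntegrable_iff_integrableOn_Ioc_of_le zero_le_one] at hii2
    rwa [integrableOn_Icc_iff_integrableOn_Ioc]
  have hprod : Integrable (fun p : ℝ × ℝ => (1-p.1)^r * (1-p.2)^r)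
      ((volume.restrict (Icc (0:ℝ) 1)).prod (volume.restrict (Icc (0:ℝ) 1))) :=
    Integrable.mul_prod hg1 hg1
  rw [Measure.prod_restrict, ← Measure.volume_eq_prod] at hprod
  refine Integrable.mono hprod ?_ ?_
  · exact ((measurable_const.sub (measurable_fst.mul measurable_snd)).pow
      measurable_const).aestronglyMeasurable
  · -- a.e. bound
    have hne1 : ∀ᵐ p : ℝ × ℝ ∂(volume.restrict (Icc (0:ℝ) 1 ×ˢ Icc (0:ℝ) 1)),
        p.1 ≠ 1 := by
      refine ae_restrict_of_ae ?_
      rw [ae_iff]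
      have : {p : ℝ × ℝ | ¬ p.1 ≠ 1} = ({1} : Set ℝ) ×ˢ (univ : Set ℝ) := by
        ext ⟨u, v⟩; simp [Set.mem_prod, Prod.ext_iff, eq_comm]
      rw [this, Measure.volume_eq_prod, Measure.prod_prod]
      simp
    have hne2 : ∀ᵐ p : ℝ × ℝ ∂(volume.restrict (Icc (0:ℝ) 1 ×ˢ Icc (0:ℝ) 1)),
        p.2 ≠ 1 := by
      refine ae_restrict_of_ae ?_
      rw [ae_iff]
      have : {p : ℝ × ℝ | ¬ p.2 ≠ 1} = (univ : Set ℝ) ×ˢ ({1} : Set ℝ) := by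
        ext ⟨u, v⟩; simp [Set.mem_prod, Prod.ext_iff, eq_comm]
      rw [this, Measure.volume_eq_prod, Measure.prod_prod]
      simp
    have hmem : ∀ᵐ p : ℝ × ℝ ∂(volume.restrict (Icc (0:ℝ) 1 ×ˢ Icc (0:ℝ) 1)),
        p ∈ Icc (0:ℝ) 1 ×ˢ Icc (0:ℝ) 1 :=
      ae_restrict_mem (measurableSet_Icc.prod measurableSet_Icc)
    filter_upwards [hne1, hne2, hmem] with p hp1 hp2 hp
    obtain ⟨⟨hx0, hx1⟩, ⟨hy0, hy1⟩⟩ := hp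
    set x := p.1
    set y := p.2
    have hx1' : x < 1 := lt_of_le_of_ne hx1 hp1
    have hy1' : y < 1 := lt_of_le_of_ne hy1 hp2
    have hxy : 0 < 1 - x*y := by nlinarith
    have h1x : 0 < 1 - x := by linarith
    have h1y : 0 < 1 - y := by linarith
    have hsq : (1-x)*(1-y) ≤ (1-x*y)^(2:ℕ) := by
      have e1 : 1-x ≤ 1-x*y := by nlinarith
      have e2 : 1-y ≤ 1-x*y := by nlinarith
      calc (1-x)*(1-y) ≤ (1-x*y)*(1-x*y) := mul_le_mul e1 e2 h1y.le hxy.le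
        _ = (1-x*y)^(2:ℕ) := (sq (1-x*y)).symm
    have hhalf : ((1-x)*(1-y))^((1:ℝ)/2) ≤ 1 - x*y := by
      have h := Real.rpow_le_rpow (by positivity) hsq (by norm_num : (0:ℝ) ≤ 1/2)
      rwa [← Real.rpow_natCast (1-x*y) 2, ← Real.rpow_mul hxy.le,
        show ((2:ℕ):ℝ) * (1/2) = 1 by norm_num, Real.rpow_one] at h
    have hmain : (1 - x*y)^(z-2) ≤ (1-x)^r * (1-y)^r := by
      have h1 := Real.rpow_le_rpow_of_nonpos (by positivity) hhalf (by linarith : z-2 ≤ 0)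
      calc (1 - x*y)^(z-2) ≤ (((1-x)*(1-y))^((1:ℝ)/2))^(z-2) := h1
        _ = ((1-x)*(1-y))^r := by
            rw [← Real.rpow_mul (by positivity)]
            norm_num [hr]
            ring_nf
        _ = (1-x)^r * (1-y)^r := Real.mul_rpow h1x.le h1y.le
    rw [Real.norm_eq_abs, abs_of_nonneg (Real.rpow_nonneg hxy.le _)]
    exact hmain.trans (le_abs_self _)

/-- The digamma function `Ψ`, the logarithmic derivative of the Gamma function. -/
noncomputable def digamma (x : ℝ) : ℝ := deriv (fun y : ℝ => Real.log (Real.Gamma y)) x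

theorem stmt2 (α : ℝ) (hα0 : 0 < α) (hα1 : α < 1) (hα : α ≠ 1/2) :
    (∫ y in (0:ℝ)..1, ∫ x in (0:ℝ)..1, (1 - x * y) ^ (2 * α - 2))
        = (Real.eulerMascheroniConstant + digamma (2 * α)) / (2 * α - 1) ∧
    MeasureTheory.IntegrableOn
      (fun p : ℝ × ℝ => (1 - p.1 * p.2) ^ (2 * α - 2))
      (Set.Icc (0:ℝ) 1 ×ˢ Set.Icc (0:ℝ) 1) := by
  have hz0 : 0 < 2 * α := by linarith
  have hz2 : 2 * α < 2 := by linarith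
  have hz1 : 2 * α ≠ 1 := by
    intro h
    exact hα (by linarith)
  set z : ℝ := 2 * α with hzdef
  have hz1' : z - 1 ≠ 0 := sub_ne_zero.2 hz1
  constructor
  · -- value of digamma
    have hdig : digamma z = -Real.eulerMascheroniConstant
        + ∑' m : ℕ, (1/((m:ℝ)+1) - 1/(z+m)) := (hasDerivAt_log_Gamma z hz0).deriv
    have hne : ∀ᵐ y : ℝ ∂(volume : Measure ℝ), y ≠ (1:ℝ) := by
      rw [ae_iff]
      have : {y : ℝ | ¬ y ≠ 1} = ({1} : Set ℝ) := by ext y; simp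
      rw [this]
      exact Real.volume_singleton
    have h1 : (∫ y in (0:ℝ)..1, ∫ x in (0:ℝ)..1, (1 - x * y) ^ (z - 2))
        = ∫ y in Ioc (0:ℝ) 1, (1 - (1-y)^(z-1))/((z-1)*y) := by
      rw [intervalIntegral.integral_of_le zero_le_one]
      refine setIntegral_congr_ae measurableSet_Ioc ?_
      filter_upwards [hne] with y hy1 hy
      exact inner_integral z hz1 ⟨hy.1, lt_of_le_of_ne hy.2 hy1⟩
    have h2 : (∫ y in Ioc (0:ℝ) 1, (1 - (1-y)^(z-1))/((z-1)*y))
        = ∫ u in Ioc (0:ℝ) 1, (1 - u^(z-1))/((z-1)*(1-u)) := by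
      rw [← intervalIntegral.integral_of_le zero_le_one,
        ← intervalIntegral.integral_of_le zero_le_one]
      have h := intervalIntegral.integral_comp_sub_left (a := 0) (b := 1)
        (fun u : ℝ => (1 - u^(z-1))/((z-1)*(1-u))) 1
      simp only [sub_sub_cancel, sub_zero, sub_self] at h
      exact h
    have h3 : (∫ u in Ioc (0:ℝ) 1, (1 - u^(z-1))/((z-1)*(1-u)))
        = (z-1)⁻¹ * ∫ u in Ioc (0:ℝ) 1, (1 - u^(z-1))/(1-u) := by
      rw [← MeasureTheory.integral_const_mul]
      refine setIntegral_congr_fun measurableSet_Ioc (fun u _ => ?_)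
      rw [div_eq_mul_inv, div_eq_mul_inv, mul_inv]
      ring
    rw [h1, h2, h3, series_integral z hz0 hz1, hdig]
    rw [show Real.eulerMascheroniConstant + (-Real.eulerMascheroniConstant
      + ∑' m : ℕ, (1/((m:ℝ)+1) - 1/(z+m))) = ∑' m : ℕ, (1/((m:ℝ)+1) - 1/(z+m)) by ring]
    rw [div_eq_inv_mul]
  · exact integrable_square z hz0 hz2
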